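/- The following are equivalent: (i) x_max·r₁₂ + Y⁻(x_max)·r₂₂ > 0 (equivalently ρ > −Y⁻(x_max)/x_max; note Y⁺(x_max) = Y⁻(x_max)); (ii) 0 < x* < x_max and −ρ·x* = Y⁻(x*), i.e. the nonzero intersection point of the ellipse γ = 0 with the line r₁₂x + r₂₂y = 0 lies on the lower branch over (0, x_max). -/

import Mathlib

open Real

set_option maxHeartbeats 1000000 in
theorem stmt6
    (σ11 σ12 σ22 μ1 μ2 : ℝ)
    (hσ11 : 0 < σ11) (hσ22 : 0 < σ22)
    (hdet : 0 < σ11 * σ22 - σ12 ^ 2)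
    (hμ1 : 0 < μ1) (hμ2 : 0 < μ2)
    (detS D1 xmin xmax : ℝ)
    (hdetS : detS = σ11 * σ22 - σ12 ^ 2)
    (hD1 : D1 = (μ2 * σ12 - μ1 * σ22) ^ 2 + μ2 ^ 2 * detS)
    (hxmin : xmin = (μ2 * σ12 - μ1 * σ22 - Real.sqrt D1) / detS)
    (hxmax : xmax = (μ2 * σ12 - μ1 * σ22 + Real.sqrt D1) / detS)
    (Ym : ℝ → ℝ)
    (hYm : ∀ x, Ym x = (-σ12 * x - μ2 -
      Real.sqrt ((σ12 ^ 2 - σ11 * σ22) * x ^ 2 + 2 * (μ2 * σ12 - μ1 * σ22) * x + μ2 ^ 2)) / σ22)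
    (r12 r22 : ℝ) (hr22 : 0 < r22)
    (ρ : ℝ) (hρ : ρ = r12 / r22)
    (xstar : ℝ)
    (hxstar : xstar = 2 * (μ2 * ρ - μ1) / (σ11 - 2 * σ12 * ρ + σ22 * ρ ^ 2)) :
    xmax * r12 + Ym xmax * r22 > 0 ↔
      (0 < xstar ∧ xstar < xmax ∧ -ρ * xstar = Ym xstar) := by
  obtain ⟨s, hs⟩ : ∃ s : ℝ, s = Real.sqrt D1 := ⟨_, rfl⟩
  rw [← hs] at hxmax hxmin
  have hdetS' : 0 < detS := by rw [hdetS]; exact hdet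
  have hD1pos : 0 < D1 := by
    rw [hD1, hdetS] at *; positivity
  have hs2 : s ^ 2 = D1 := by rw [hs]; exact Real.sq_sqrt hD1pos.le
  have hspos : 0 < s := by rw [hs]; exact Real.sqrt_pos.mpr hD1pos
  have hc : 0 < μ2 ^ 2 * detS := by positivity
  have hbs : μ2 * σ12 - μ1 * σ22 < s := by nlinarith [hs2, hD1, hc, hspos]
  have hbs' : -s < μ2 * σ12 - μ1 * σ22 := by nlinarith [hs2, hD1, hc, hspos]
  have hbspos : 0 < μ2 * σ12 - μ1 * σ22 + s := by linarith
  have hApos : 0 < σ11 - 2 * σ12 * ρ + σ22 * ρ ^ 2 := by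
    nlinarith [sq_nonneg (σ22 * ρ - σ12), hdet, hσ22]
  have hAne : σ11 - 2 * σ12 * ρ + σ22 * ρ ^ 2 ≠ 0 := hApos.ne'
  have hAx : (σ11 - 2 * σ12 * ρ + σ22 * ρ ^ 2) * xstar = 2 * (μ2 * ρ - μ1) := by
    rw [hxstar, mul_div_assoc']; exact mul_div_cancel_left₀ _ hAne
  have hxmaxd : detS * xmax = μ2 * σ12 - μ1 * σ22 + s := by
    rw [hxmax]; field_simp
  have hr12 : r12 = ρ * r22 := by rw [hρ]; field_simp
  -- value of Ym at xmax
  have hQxmax0 : (σ12 ^ 2 - σ11 * σ22) * xmax ^ 2 + 2 * (μ2 * σ12 - μ1 * σ22) * xmax + μ2 ^ 2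
      = 0 := by
    have h1 : detS * ((σ12 ^ 2 - σ11 * σ22) * xmax ^ 2 + 2 * (μ2 * σ12 - μ1 * σ22) * xmax
        + μ2 ^ 2) = 0 := by
      linear_combination xmax ^ 2 * detS * hdetS - hs2 - hD1
        - (detS * xmax - ((μ2 * σ12 - μ1 * σ22) - s)) * hxmaxd
    exact (mul_eq_zero.mp h1).resolve_left hdetS'.ne'
  have hYmxmax : Ym xmax = (-σ12 * xmax - μ2) / σ22 := by
    rw [hYm xmax, hQxmax0, Real.sqrt_zero]
    ring
  -- LHS ↔ 0 < T
  have hLHS : (xmax * r12 + Ym xmax * r22 > 0) ↔ 0 < μ2 * σ22 * ρ - μ1 * σ22 - s := by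
    have key : xmax * r12 + Ym xmax * r22
        = ((σ22 * ρ - σ12) * xmax - μ2) * (r22 / σ22) := by
      rw [hr12, hYmxmax]; field_simp; ring
    have hrs : 0 < r22 / σ22 := div_pos hr22 hσ22
    have hMx : μ2 * (detS * ((σ22 * ρ - σ12) * xmax - μ2))
        = (μ2 * σ12 - μ1 * σ22 + s) * (μ2 * σ22 * ρ - μ1 * σ22 - s) := by
      linear_combination (σ22 * ρ - σ12) * μ2 * hxmaxd + hs2 + hD1
    rw [key]
    constructor
    · intro h
      have hE : 0 < (σ22 * ρ - σ12) * xmax - μ2 := by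
        by_contra hcon
        push_neg at hcon
        nlinarith [mul_nonneg (neg_nonneg.mpr hcon) hrs.le]
      nlinarith [hMx, mul_pos (mul_pos hμ2 hdetS') hE, hbspos]
    · intro hT
      have hE : 0 < (σ22 * ρ - σ12) * xmax - μ2 := by
        nlinarith [hMx, mul_pos hbspos hT, mul_pos hμ2 hdetS']
      exact mul_pos hE hrs
  -- 0 < xstar ↔ μ1 < μ2 * ρ
  have hxspos : 0 < xstar ↔ μ1 < μ2 * ρ := by
    rw [hxstar, div_pos_iff]
    constructor
    · rintro (⟨h1, _⟩ | ⟨_, h2⟩)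
      · linarith
      · exact absurd h2 (not_lt.mpr hApos.le)
    · intro h; exact Or.inl ⟨by linarith, hApos⟩
  -- Q(xstar) = L ^ 2
  have hQL : (σ12 ^ 2 - σ11 * σ22) * xstar ^ 2 + 2 * (μ2 * σ12 - μ1 * σ22) * xstar + μ2 ^ 2
      = ((σ22 * ρ - σ12) * xstar - μ2) ^ 2 := by
    linear_combination (-σ22 * xstar) * hAx
  -- -ρ xstar = Ym xstar ↔ 0 ≤ L
  have hYmstar : (-ρ * xstar = Ym xstar) ↔ 0 ≤ (σ22 * ρ - σ12) * xstar - μ2 := by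
    rw [hYm xstar, hQL, Real.sqrt_sq_eq_abs]
    constructor
    · intro h
      have h2 : |(σ22 * ρ - σ12) * xstar - μ2| = (σ22 * ρ - σ12) * xstar - μ2 := by
        field_simp at h
        have e : xstar * (ρ * σ22 - σ12) - μ2 = (σ22 * ρ - σ12) * xstar - μ2 := by ring
        rw [e] at h
        linarith [h]
      linarith [abs_nonneg ((σ22 * ρ - σ12) * xstar - μ2), h2]
    · intro h
      rw [abs_of_nonneg h]
      field_simp
      ring
  -- key identities
  have hALN : (σ11 - 2 * σ12 * ρ + σ22 * ρ ^ 2) * ((σ22 * ρ - σ12) * xstar - μ2)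
      = μ2 * σ22 * ρ ^ 2 - 2 * μ1 * σ22 * ρ + 2 * μ1 * σ12 - μ2 * σ11 := by
    linear_combination (σ22 * ρ - σ12) * hAx
  have hNT : μ2 * σ22 * (μ2 * σ22 * ρ ^ 2 - 2 * μ1 * σ22 * ρ + 2 * μ1 * σ12 - μ2 * σ11)
      = (μ2 * σ22 * ρ - μ1 * σ22 - s) * ((μ2 * σ22 * ρ - μ1 * σ22 - s) + 2 * s) := by
    linear_combination hs2 + hD1 + μ2 ^ 2 * hdetS
  have hQfac : detS * ((σ12 ^ 2 - σ11 * σ22) * xstar ^ 2 + 2 * (μ2 * σ12 - μ1 * σ22) * xstar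
      + μ2 ^ 2) = -((detS * xstar - ((μ2 * σ12 - μ1 * σ22) - s))
        * (detS * xstar - ((μ2 * σ12 - μ1 * σ22) + s))) := by
    linear_combination xstar ^ 2 * detS * hdetS - hs2 - hD1
  rw [hLHS, hxspos]
  constructor
  · intro hT
    have hμρ : μ1 < μ2 * ρ := by
      by_contra hc
      push_neg at hc
      have := mul_nonneg hσ22.le (by linarith : (0:ℝ) ≤ μ1 - μ2 * ρ)
      linarith
    have hxs : 0 < xstar := hxspos.mpr hμρ
    have hNpos : 0 < μ2 * σ22 * ρ ^ 2 - 2 * μ1 * σ22 * ρ + 2 * μ1 * σ12 - μ2 * σ11 := by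
      have h2 : 0 < μ2 * σ22 * (μ2 * σ22 * ρ ^ 2 - 2 * μ1 * σ22 * ρ + 2 * μ1 * σ12 - μ2 * σ11) := by
        rw [hNT]
        exact mul_pos hT (by linarith)
      by_contra hc
      push_neg at hc
      have := mul_nonneg (mul_nonneg hμ2.le hσ22.le) (neg_nonneg.mpr hc)
      linarith
    have hLpos : 0 < (σ22 * ρ - σ12) * xstar - μ2 := by
      have h2 : 0 < (σ11 - 2 * σ12 * ρ + σ22 * ρ ^ 2) * ((σ22 * ρ - σ12) * xstar - μ2) := by
        rw [hALN]; exact hNpos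
      by_contra hc
      push_neg at hc
      have := mul_nonneg hApos.le (neg_nonneg.mpr hc)
      linarith
    refine ⟨hμρ, ?_, hYmstar.mpr hLpos.le⟩
    -- xstar < xmax
    have hQpos : 0 < (σ12 ^ 2 - σ11 * σ22) * xstar ^ 2
        + 2 * (μ2 * σ12 - μ1 * σ22) * xstar + μ2 ^ 2 := by
      rw [hQL]; positivity
    have hf1 : 0 < detS * xstar - ((μ2 * σ12 - μ1 * σ22) - s) := by
      linarith [mul_pos hdetS' hxs, hbs]
    have hf2 : detS * xstar - ((μ2 * σ12 - μ1 * σ22) + s) < 0 := by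
      by_contra hc
      push_neg at hc
      have h1 := mul_nonneg hf1.le hc
      have h2 := mul_pos hdetS' hQpos
      linarith [hQfac]
    have : detS * xstar < detS * xmax := by rw [hxmaxd]; linarith
    exact lt_of_mul_lt_mul_left this hdetS'.le
  · rintro ⟨hμρ, hlt, hym⟩
    have hLnn : 0 ≤ (σ22 * ρ - σ12) * xstar - μ2 := hYmstar.mp hym
    have hNnn : 0 ≤ μ2 * σ22 * ρ ^ 2 - 2 * μ1 * σ22 * ρ + 2 * μ1 * σ12 - μ2 * σ11 := by
      rw [← hALN]; exact mul_nonneg hApos.le hLnn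
    have hT2s : 0 < (μ2 * σ22 * ρ - μ1 * σ22 - s) + 2 * s := by
      have := mul_pos hσ22 (by linarith : (0:ℝ) < μ2 * ρ - μ1)
      linarith
    have hTnn : 0 ≤ μ2 * σ22 * ρ - μ1 * σ22 - s := by
      by_contra hc
      push_neg at hc
      have h1 := mul_neg_of_neg_of_pos hc hT2s
      have h2 := mul_nonneg (mul_nonneg hμ2.le hσ22.le) hNnn
      linarith [hNT]
    rcases lt_or_eq_of_le hTnn with h | h
    · exact h
    · exfalso
      have hN0 : μ2 * σ22 * ρ ^ 2 - 2 * μ1 * σ22 * ρ + 2 * μ1 * σ12 - μ2 * σ11 = 0 := by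
        have h1 : μ2 * σ22 * (μ2 * σ22 * ρ ^ 2 - 2 * μ1 * σ22 * ρ + 2 * μ1 * σ12 - μ2 * σ11)
            = 0 := by rw [hNT, ← h]; ring
        have hms : μ2 * σ22 ≠ 0 := by positivity
        exact (mul_eq_zero.mp h1).resolve_left hms
      have hL0 : (σ22 * ρ - σ12) * xstar - μ2 = 0 := by
        have h1 : (σ11 - 2 * σ12 * ρ + σ22 * ρ ^ 2) * ((σ22 * ρ - σ12) * xstar - μ2) = 0 := by
          rw [hALN, hN0]
        exact (mul_eq_zero.mp h1).resolve_left hAne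
      have hQ0 : (σ12 ^ 2 - σ11 * σ22) * xstar ^ 2 + 2 * (μ2 * σ12 - μ1 * σ22) * xstar
          + μ2 ^ 2 = 0 := by rw [hQL, hL0]; ring
      have hxs : 0 < xstar := hxspos.mpr hμρ
      have hf1 : 0 < detS * xstar - ((μ2 * σ12 - μ1 * σ22) - s) := by
        linarith [mul_pos hdetS' hxs, hbs]
      have hfac0 : (detS * xstar - ((μ2 * σ12 - μ1 * σ22) - s))
          * (detS * xstar - ((μ2 * σ12 - μ1 * σ22) + s)) = 0 := by
        have := hQfac
        rw [hQ0] at this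
        linarith
      have hf2 : detS * xstar - ((μ2 * σ12 - μ1 * σ22) + s) = 0 :=
        (mul_eq_zero.mp hfac0).resolve_left hf1.ne'
      have : detS * xstar = detS * xmax := by rw [hxmaxd]; linarith
      have := mul_left_cancel₀ hdetS'.ne' this
      linarith
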